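/- Let S be a finite set, let P be an irreducible stochastic matrix on S in detailed balance with a probability distribution π on S with π_s > 0 for all s, and let X ⊆ S be nonempty with P_{ss} < 1 for every s ∈ S∖X. Define the rejection-free matrix P' by: (P')_{ss'} = P_{ss'} if s ∈ X; (P')_{ss'} = P_{ss'}/(1 − P_{ss}) if s ∈ S∖X and s' ≠ s; and (P')_{ss} = 0 if s ∈ S∖X. Then the watched-chain matrix of P' on X, namely (P̄')_{ss'} := (P')_{ss'} + Σ_{n=0}^∞ Σ_{s_0,…,s_n ∈ S∖X} (P')_{s s_0} (Π_{l=1}^n (P')_{s_{l-1} s_l}) (P')_{s_n s'} for s,s' ∈ X, is in detailed balance with the normalized restriction π̄_s = π_s / Σ_{t∈X} π_t. -/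

import Mathlib

open Finset

/-- The sum over all `(n+1)`-tuples of states lying in `Y` of the product of transition
probabilities along the corresponding path `s → s₀ → s₁ → ⋯ → sₙ → s'`. -/
noncomputable def tupSum {S : Type*} [Fintype S] [DecidableEq S]
    (P : Matrix S S ℝ) (Y : Finset S) (s s' : S) (n : ℕ) : ℝ :=
  ∑ f : Fin (n + 1) → S,
    if ∀ i, f i ∈ Y then
      P s (f 0) * (∏ i : Fin n, P (f i.castSucc) (f i.succ)) * P (f (Fin.last n)) s'
    else 0

/-- The watched-chain ("observed only on `X`") transition kernel
`P̄ s s' = P s s' + ∑_{n=0}^∞ ∑_{s₀,…,sₙ ∈ S∖X} P s s₀ (∏ P s_{l-1} s_l) P sₙ s'`. -/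
noncomputable def watched {S : Type*} [Fintype S] [DecidableEq S]
    (P : Matrix S S ℝ) (X : Finset S) (s s' : S) : ℝ :=
  P s s' + ∑' n : ℕ, tupSum P Xᶜ s s' n

/-- The rejection-free modification of `P` outside `X`: identity transitions from states of
`S ∖ X` are forbidden and the remaining transition probabilities are rescaled. -/
noncomputable def rejFree {S : Type*} [Fintype S] [DecidableEq S]
    (P : Matrix S S ℝ) (X : Finset S) : Matrix S S ℝ :=
  Matrix.of fun s s' =>
    if s ∈ X then P s s'
    else if s' = s then 0 else P s s' / (1 - P s s)

section Aux

variable {S : Type*} [Fintype S] [DecidableEq S]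

/-- Auxiliary (unnormalized) measure in detailed balance with the rejection-free matrix. -/
noncomputable def muAux (P : Matrix S S ℝ) (pd : S → ℝ) (X : Finset S) (t : S) : ℝ :=
  if t ∈ X then pd t else pd t * (1 - P t t)

lemma muAux_db (P : Matrix S S ℝ) (pd : S → ℝ) (X : Finset S)
    (hdb : ∀ s s', pd s * P s s' = pd s' * P s' s)
    (hdiag : ∀ s ∉ X, P s s < 1) (t u : S) :
    muAux P pd X t * rejFree P X t u = muAux P pd X u * rejFree P X u t := by
  unfold muAux rejFree
  by_cases htu : t = u
  · subst htu; rfl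
  simp only [Matrix.of_apply]
  by_cases ht : t ∈ X <;> by_cases hu : u ∈ X <;>
      simp only [ht, hu, if_true, if_false, htu, Ne.symm htu, if_neg, ite_false]
  · exact hdb t u
  · have h1 : (1 : ℝ) - P u u ≠ 0 := by have := hdiag u hu; intro h; linarith
    field_simp
    linear_combination hdb t u
  · have h1 : (1 : ℝ) - P t t ≠ 0 := by have := hdiag t ht; intro h; linarith
    field_simp
    linear_combination hdb t u
  · have h1 : (1 : ℝ) - P t t ≠ 0 := by have := hdiag t ht; intro h; linarith
    have h2 : (1 : ℝ) - P u u ≠ 0 := by have := hdiag u hu; intro h; linarith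
    field_simp
    linear_combination hdb t u

/-- Telescoping detailed balance along a path. -/
lemma telescope {S : Type*} [Fintype S] [DecidableEq S] (Q : Matrix S S ℝ) (μ : S → ℝ)
    (h : ∀ t u, μ t * Q t u = μ u * Q u t) :
    ∀ (n : ℕ) (s : S) (g : Fin (n + 1) → S),
      μ s * (Q s (g 0) * ∏ i : Fin n, Q (g i.castSucc) (g i.succ)) =
        μ (g (Fin.last n)) * ((∏ i : Fin n, Q (g i.succ) (g i.castSucc)) * Q (g 0) s) := by
  intro n
  induction n with
  | zero =>
      intro s g
      simpa using h s (g 0)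
  | succ n ih =>
      intro s g
      have key := h s (g 0)
      have ihh := ih (g 0) (fun i => g i.succ)
      simp only [Fin.succ_castSucc] at ihh
      rw [Fin.prod_univ_succ (fun i : Fin (n+1) => Q (g i.castSucc) (g i.succ)),
        Fin.prod_univ_succ (fun i : Fin (n+1) => Q (g i.succ) (g i.castSucc))]
      simp only [Fin.succ_castSucc, Fin.castSucc_zero]
      rw [← Fin.succ_last]
      linear_combination
        (Q (g 0) (g (Fin.succ (0 : Fin (n+1)))) *
          ∏ x : Fin n, Q (g x.succ.castSucc) (g x.succ.succ)) * key + Q (g 0) s * ihh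

lemma tupSum_db {S : Type*} [Fintype S] [DecidableEq S]
    (P : Matrix S S ℝ) (pd : S → ℝ) (X : Finset S)
    (hdb : ∀ s s', pd s * P s s' = pd s' * P s' s)
    (hdiag : ∀ s ∉ X, P s s < 1)
    {s s' : S} (hs : s ∈ X) (hs' : s' ∈ X) (n : ℕ) :
    pd s * tupSum (rejFree P X) Xᶜ s s' n = pd s' * tupSum (rejFree P X) Xᶜ s' s n := by
  set Q := rejFree P X with hQ
  set μ := muAux P pd X with hμ
  have hmu : ∀ t u, μ t * Q t u = μ u * Q u t := muAux_db P pd X hdb hdiag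
  have hμs : μ s = pd s := by simp [hμ, muAux, hs]
  have hμs' : μ s' = pd s' := by simp [hμ, muAux, hs']
  unfold tupSum
  rw [mul_sum, mul_sum]
  refine Fintype.sum_bijective (fun f : Fin (n+1) → S => f ∘ Fin.rev)
    ⟨fun f g hfg => ?_, fun f => ⟨f ∘ Fin.rev, ?_⟩⟩ _ _ ?_
  · funext i
    have := congrFun hfg i.rev
    simpa using this
  · funext i
    simp [Function.comp, Fin.rev_rev]
  · intro f
    simp only [Function.comp]
    by_cases hf : ∀ i : Fin (n+1), f i ∈ Xᶜ
    · have hf' : ∀ i : Fin (n+1), f (Fin.rev i) ∈ Xᶜ := fun i => hf i.rev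
      rw [if_pos hf, if_pos hf']
      rw [Fin.rev_zero, Fin.rev_last]
      simp only [Fin.rev_castSucc, Fin.rev_succ]
      have hrev : (∏ i : Fin n, Q (f i.rev.succ) (f i.rev.castSucc)) =
          ∏ i : Fin n, Q (f i.succ) (f i.castSucc) := by
        exact Fintype.prod_bijective Fin.rev Fin.rev_bijective _ _ fun i => rfl
      rw [hrev]
      have tel := telescope Q μ hmu n s f
      have step2 := hmu (f (Fin.last n)) s'
      rw [← hμs, ← hμs']
      linear_combination Q (f (Fin.last n)) s' * tel +
        ((∏ i : Fin n, Q (f i.succ) (f i.castSucc)) * Q (f 0) s) * step2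
    · have hf' : ¬ ∀ i : Fin (n+1), f (Fin.rev i) ∈ Xᶜ := by
        intro h
        exact hf fun i => by simpa [Fin.rev_rev] using h i.rev
      rw [if_neg hf, if_neg hf']
      simp

end Aux

theorem watched_rejection_free_detailed_balance
    {S : Type*} [Fintype S] [DecidableEq S]
    (P : Matrix S S ℝ) (pd : S → ℝ)
    (hPnn : ∀ s s', 0 ≤ P s s')
    (hProw : ∀ s, ∑ s', P s s' = 1)
    (hirr : ∀ s s', ∃ n : ℕ, 1 ≤ n ∧ 0 < (P ^ n) s s')
    (hpos : ∀ s, 0 < pd s)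
    (hsum : ∑ s, pd s = 1)
    (hdb : ∀ s s', pd s * P s s' = pd s' * P s' s)
    (X : Finset S) (hX : X.Nonempty) (hdiag : ∀ s ∉ X, P s s < 1) :
    ∀ s ∈ X, ∀ s' ∈ X,
      (pd s / ∑ t ∈ X, pd t) * watched (rejFree P X) X s s' =
        (pd s' / ∑ t ∈ X, pd t) * watched (rejFree P X) X s' s := by
  intro s hs s' hs'
  have key : pd s * watched (rejFree P X) X s s' = pd s' * watched (rejFree P X) X s' s := by
    unfold watched
    rw [mul_add, mul_add, ← tsum_mul_left, ← tsum_mul_left]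
    congr 1
    · simp only [rejFree, Matrix.of_apply, hs, hs', if_true]
      exact hdb s s'
    · exact tsum_congr fun n => tupSum_db P pd X hdb hdiag hs hs' n
  rw [div_mul_eq_mul_div, div_mul_eq_mul_div, key]
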